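/- Let r and d be integers with r ≥ 2 and d ≥ 2r−1, and let g be the genus of the Castelnuovo semigroup S_{r,d}. Then g + r ≥ d and the effective weight of S_{r,d} satisfies ewt(S_{r,d}) = r·(g − d + r); i.e., the sum over all gaps b of S_{r,d} of the number of elements a ∈ {d−r+1, …, d} with a < b equals r(g − d + r). -/

import Mathlib

/-- The Castelnuovo semigroup `S_{r,d}`: the additive submonoid of ℕ generated by
the interval of integers `{d-r+1, …, d}`. -/
def castelnuovoSemigroup (r d : ℕ) : AddSubmonoid ℕ :=
  AddSubmonoid.closure (Set.Icc (d - r + 1) d)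

/-- A minimal generator of a numerical semigroup `S ⊆ ℕ`: a nonzero element of `S`
that cannot be written as a sum of two nonzero elements of `S`. -/
def IsMinimalGenerator (S : AddSubmonoid ℕ) (a : ℕ) : Prop :=
  a ∈ S ∧ a ≠ 0 ∧ ¬ ∃ x ∈ S, ∃ y ∈ S, x ≠ 0 ∧ y ≠ 0 ∧ a = x + y

/-- The effective weight of a numerical semigroup: the number of pairs `(b, a)` where
`b` is a gap of `S` and `a` is a minimal generator of `S` with `a < b`.  This equals
`Σ_{b ∈ ℕ∖S} #{minimal generators a of S with a < b}`. -/
noncomputable def effectiveWeight (S : AddSubmonoid ℕ) : ℕ :=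
  {p : ℕ × ℕ | p.1 ∉ S ∧ IsMinimalGenerator S p.2 ∧ p.2 < p.1}.ncard

lemma casteldecomp {r d : ℕ} (hr : 1 ≤ r) (hd : r ≤ d) (k n : ℕ)
    (h1 : (k + 1) * (d - r + 1) ≤ n) (h2 : n ≤ (k + 1) * d) :
    ∃ a b, a + b = n ∧ d - r + 1 ≤ a ∧ a ≤ d ∧ k * (d - r + 1) ≤ b ∧ b ≤ k * d := by
  have hAB : k * (d - r + 1) ≤ k * d := Nat.mul_le_mul_left k (by omega)
  refine ⟨min d (n - k * (d - r + 1)), n - min d (n - k * (d - r + 1)), ?_, ?_, ?_, ?_, ?_⟩ <;>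
  · rw [Nat.succ_mul] at h1 h2
    omega

lemma castel_mem_iff {r d : ℕ} (hr : 2 ≤ r) (hd : 2 * r - 1 ≤ d) (n : ℕ) :
    n ∈ castelnuovoSemigroup r d ↔ ∃ k, k * (d - r + 1) ≤ n ∧ n ≤ k * d := by
  constructor
  · intro hn
    induction hn using AddSubmonoid.closure_induction with
    | mem x hx =>
      rw [Set.mem_Icc] at hx
      exact ⟨1, by omega⟩
    | zero => exact ⟨0, by omega⟩
    | add x y hx hy ihx ihy =>
      obtain ⟨k1, h1, h2⟩ := ihx
      obtain ⟨k2, h3, h4⟩ := ihy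
      exact ⟨k1 + k2, by rw [Nat.add_mul, Nat.add_mul]; omega⟩
  · rintro ⟨k, h1, h2⟩
    induction k generalizing n with
    | zero =>
      simp only [Nat.zero_mul] at h1 h2
      have : n = 0 := by omega
      simpa [this] using (castelnuovoSemigroup r d).zero_mem
    | succ k ih =>
      obtain ⟨a, b, hab, ha1, ha2, hb1, hb2⟩ := casteldecomp (by omega) (by omega) k n h1 h2
      have haS : a ∈ castelnuovoSemigroup r d :=
        AddSubmonoid.subset_closure (Set.mem_Icc.2 ⟨ha1, ha2⟩)
      have hbS : b ∈ castelnuovoSemigroup r d := ih b hb1 hb2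
      simpa [hab] using add_mem haS hbS

lemma castel_min {r d : ℕ} (hr : 2 ≤ r) (hd : 2 * r - 1 ≤ d) {x : ℕ}
    (hx : x ∈ castelnuovoSemigroup r d) (hx0 : x ≠ 0) : d - r + 1 ≤ x := by
  obtain ⟨k, h1, h2⟩ := (castel_mem_iff hr hd x).1 hx
  match k with
  | 0 => simp only [Nat.zero_mul] at h2; omega
  | k + 1 => rw [Nat.succ_mul] at h1; omega

lemma castel_minGen_iff {r d : ℕ} (hr : 2 ≤ r) (hd : 2 * r - 1 ≤ d) (a : ℕ) :
    IsMinimalGenerator (castelnuovoSemigroup r d) a ↔ a ∈ Set.Icc (d - r + 1) d := by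
  constructor
  · rintro ⟨ha, ha0, hsum⟩
    obtain ⟨k, h1, h2⟩ := (castel_mem_iff hr hd a).1 ha
    match k with
    | 0 =>
      simp only [Nat.zero_mul] at h2
      omega
    | 1 =>
      rw [Nat.one_mul] at h1 h2
      exact Set.mem_Icc.2 ⟨h1, h2⟩
    | k + 2 =>
      exfalso
      obtain ⟨x, y, hxy, hx1, hx2, hy1, hy2⟩ :=
        casteldecomp (by omega) (by omega) (k + 1) a h1 h2
      have hxS : x ∈ castelnuovoSemigroup r d :=
        AddSubmonoid.subset_closure (Set.mem_Icc.2 ⟨hx1, hx2⟩)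
      have hyS : y ∈ castelnuovoSemigroup r d := (castel_mem_iff hr hd y).2 ⟨k + 1, hy1, hy2⟩
      have hy0 : y ≠ 0 := by rw [Nat.succ_mul] at hy1; omega
      exact hsum ⟨x, hxS, y, hyS, by omega, hy0, hxy.symm⟩
  · intro ha
    rw [Set.mem_Icc] at ha
    refine ⟨AddSubmonoid.subset_closure (Set.mem_Icc.2 ha), by omega, ?_⟩
    rintro ⟨x, hx, y, hy, hx0, hy0, rfl⟩
    have h1 := castel_min hr hd hx hx0
    have h2 := castel_min hr hd hy hy0
    omega

lemma castel_gap_lt {r d : ℕ} (hr : 2 ≤ r) (hd : 2 * r - 1 ≤ d) {n : ℕ}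
    (hn : n ∉ castelnuovoSemigroup r d) : n < d * (d - r + 1) := by
  by_contra h
  push_neg at h
  apply hn
  rw [castel_mem_iff hr hd]
  set m := d - r + 1 with hm
  have hm0 : 0 < m := by omega
  refine ⟨n / m, Nat.div_mul_le_self n m, ?_⟩
  have hk : d ≤ n / m := (Nat.le_div_iff_mul_le hm0).2 h
  have hmod := Nat.div_add_mod n m
  rw [Nat.mul_comm] at hmod
  have hmodlt : n % m < m := Nat.mod_lt _ hm0
  have h1 : d * (r - 1) ≤ n / m * (r - 1) := Nat.mul_le_mul_right _ hk
  have h2 : d ≤ d * (r - 1) := Nat.le_mul_of_pos_right d (by omega)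
  have h3 : n / m * m + n / m * (r - 1) = n / m * d := by
    rw [← Nat.mul_add]
    congr 1
    omega
  omega

theorem castelnuovo_effective_weight (r d : ℕ) (hr : 2 ≤ r) (hd : 2 * r - 1 ≤ d)
    (g : ℕ) (hg : g = ((castelnuovoSemigroup r d : Set ℕ)ᶜ).ncard) :
    d ≤ g + r ∧
    effectiveWeight (castelnuovoSemigroup r d) = r * (g + r - d) ∧
    {p : ℕ × ℕ | p.1 ∉ castelnuovoSemigroup r d ∧ p.2 ∈ Set.Icc (d - r + 1) d ∧
        p.2 < p.1}.ncard = r * (g + r - d) := by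
  classical
  set S := castelnuovoSemigroup r d with hS
  set M := d * (d - r + 1) with hM
  set Gf : Finset ℕ := (Finset.range M).filter (fun n => n ∉ S) with hGf
  have hGset : ((S : Set ℕ)ᶜ) = ↑Gf := by
    ext n
    simp only [Set.mem_compl_iff, SetLike.mem_coe, hGf, Finset.coe_filter,
      Finset.mem_range, Set.mem_setOf_eq]
    exact ⟨fun h => ⟨castel_gap_lt hr hd h, h⟩, fun h => h.2⟩
  have hgcard : g = Gf.card := by rw [hg, hGset, Set.ncard_coe_finset]
  set Bf : Finset ℕ := Gf.filter (fun n => d < n) with hBf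
  have hA : Gf.filter (fun n => ¬ d < n) = Finset.Icc 1 (d - r) := by
    ext n
    simp only [hGf, Finset.mem_filter, Finset.mem_range, Finset.mem_Icc, not_lt]
    constructor
    · rintro ⟨⟨hnM, hnS⟩, hnd⟩
      constructor
      · rcases Nat.eq_zero_or_pos n with h0 | h0
        · exact absurd (h0 ▸ S.zero_mem) hnS
        · exact h0
      · by_contra hcon
        push_neg at hcon
        exact hnS (AddSubmonoid.subset_closure (Set.mem_Icc.2 ⟨by omega, hnd⟩))
    · rintro ⟨h1, h2⟩
      have hnS : n ∉ S := by
        intro hn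
        have := castel_min hr hd hn (by omega)
        omega
      refine ⟨⟨?_, hnS⟩, by omega⟩
      have : 1 * (d - r + 1) ≤ M := Nat.mul_le_mul_right _ (by omega)
      omega
  have hsplit : Bf.card + (d - r) = Gf.card := by
    have h := Finset.card_filter_add_card_filter_not (s := Gf)
      (p := fun n => d < n)
    rw [hA, ← hBf] at h
    rw [Nat.card_Icc] at h
    omega
  have hge : d ≤ g + r := by omega
  have hpair : {p : ℕ × ℕ | p.1 ∉ S ∧ p.2 ∈ Set.Icc (d - r + 1) d ∧ p.2 < p.1}
      = ↑(Bf ×ˢ Finset.Icc (d - r + 1) d) := by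
    ext ⟨b, a⟩
    simp only [Set.mem_setOf_eq, Finset.coe_product, Set.mem_prod, Finset.mem_coe,
      hBf, hGf, Finset.mem_filter, Finset.mem_range, Finset.mem_Icc, Set.mem_Icc]
    constructor
    · rintro ⟨h1, ⟨h2, h3⟩, h4⟩
      have hbM := castel_gap_lt hr hd h1
      refine ⟨⟨⟨hbM, h1⟩, ?_⟩, h2, h3⟩
      by_contra hbd
      push_neg at hbd
      exact h1 (AddSubmonoid.subset_closure (Set.mem_Icc.2 ⟨by omega, hbd⟩))
    · rintro ⟨⟨⟨hbM, hb⟩, hdb⟩, h2, h3⟩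
      exact ⟨hb, ⟨h2, h3⟩, by omega⟩
  have hcard3 : {p : ℕ × ℕ | p.1 ∉ S ∧ p.2 ∈ Set.Icc (d - r + 1) d ∧ p.2 < p.1}.ncard
      = r * (g + r - d) := by
    rw [hpair, Set.ncard_coe_finset, Finset.card_product, Nat.card_Icc]
    have h1 : d + 1 - (d - r + 1) = r := by omega
    have h2 : g + r - d = Bf.card := by omega
    rw [h1, h2, Nat.mul_comm]
  refine ⟨hge, ?_, hcard3⟩
  have hsets : {p : ℕ × ℕ | p.1 ∉ S ∧ IsMinimalGenerator S p.2 ∧ p.2 < p.1}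
      = {p : ℕ × ℕ | p.1 ∉ S ∧ p.2 ∈ Set.Icc (d - r + 1) d ∧ p.2 < p.1} := by
    ext p
    simp only [Set.mem_setOf_eq, hS, castel_minGen_iff hr hd]
  rw [effectiveWeight, hsets]
  exact hcard3
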